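/- Let N be a squarefree positive integer and z ∈ ℍ a point of the upper half-plane satisfying Im(σ·z) ≤ Im(z) for all σ ∈ A₀(N). Then Im(z) ≥ √3/(2N), and for every pair of integers (c,d) ≠ (0,0) one has |cz + d|² ≥ gcd(c,N)/N (with the convention gcd(0,N) = N). -/

import Mathlib

open MeasureTheory Real Matrix Set

noncomputable section

/-- 2×2 real matrices. -/
abbrev M2 := Matrix (Fin 2) (Fin 2) ℝ

/-- The lattice R(ℓ) = { (a, b; c, d) : a, d ∈ ℤ, b ∈ (1/ℓ)ℤ, c ∈ (N/ℓ)ℤ }. -/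
def Rlat (N ℓ : ℕ) : Set M2 :=
  {γ | (∃ n : ℤ, γ 0 0 = (n : ℝ)) ∧ (∃ n : ℤ, γ 0 1 = (n : ℝ) / ℓ) ∧
       (∃ n : ℤ, γ 1 0 = (n : ℝ) * N / ℓ) ∧ (∃ n : ℤ, γ 1 1 = (n : ℝ))}

/-- The conjugated lattice R(ℓ;g) = g⁻¹ · R(ℓ) · g. -/
def Rconj (N ℓ : ℕ) (g : M2) : Set M2 := {γ | g * γ * g⁻¹ ∈ Rlat N ℓ}

/-- P(γ): half the sum of the squares of the four entries of γ. -/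
def Pfun (γ : M2) : ℝ := ((γ 0 0) ^ 2 + (γ 0 1) ^ 2 + (γ 1 0) ^ 2 + (γ 1 1) ^ 2) / 2

/-- Ω(δ,L) = {γ : P(γ) ≤ L² and P(γ) − det γ ≤ 2δL²}. -/
def OmegaSet (δ L : ℝ) : Set M2 := {γ | Pfun γ ≤ L ^ 2 ∧ Pfun γ - γ.det ≤ 2 * δ * L ^ 2}

/-- Ω⋆(δ,L): nonzero elements of Ω(δ,L). -/
def OmegaStar (δ L : ℝ) : Set M2 := {γ | γ ∈ OmegaSet δ L ∧ γ ≠ 0}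

/-- Ψ(δ,L) = {γ : P(γ) ≤ L² and P(γ) + det γ ≤ 2δL²}. -/
def PsiSet (δ L : ℝ) : Set M2 := {γ | Pfun γ ≤ L ^ 2 ∧ Pfun γ + γ.det ≤ 2 * δ * L ^ 2}

/-- Ψ⋆(δ,L): nonzero elements of Ψ(δ,L). -/
def PsiStar (δ L : ℝ) : Set M2 := {γ | γ ∈ PsiSet δ L ∧ γ ≠ 0}

/-- Möbius action of a 2×2 real matrix on a complex number. -/
def moebius (m : M2) (z : ℂ) : ℂ :=
  ((m 0 0 : ℂ) * z + (m 0 1 : ℂ)) / ((m 1 0 : ℂ) * z + (m 1 1 : ℂ))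

/-- A₀(N): determinant-one matrices of the form Q^{−1/2}·(Qa, b; Nc, Qd)
    with Q a positive divisor of N and a,b,c,d ∈ ℤ. -/
def AtkinLehner (N : ℕ) : Set M2 :=
  {σ | σ.det = 1 ∧ ∃ (Q : ℕ) (a b c d : ℤ), 0 < Q ∧ Q ∣ N ∧
     σ = (Real.sqrt Q)⁻¹ • !![(Q : ℝ) * a, (b : ℝ); (N : ℝ) * c, (Q : ℝ) * d]}

/-- H(g) = sup_{σ ∈ A₀(N)} Im(σ·(g·i)). -/
def Hgt (N : ℕ) (g : M2) : ℝ :=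
  sSup ((fun σ => (moebius σ (moebius g Complex.I)).im) '' AtkinLehner N)

lemma moebius_im_eq (m : M2) (z : ℂ) (h : (m 1 0 : ℂ) * z + (m 1 1 : ℂ) ≠ 0) :
    (moebius m z).im = m.det * z.im / Complex.normSq ((m 1 0 : ℂ) * z + (m 1 1 : ℂ)) := by
  have hns : Complex.normSq ((m 1 0 : ℂ) * z + (m 1 1 : ℂ)) ≠ 0 := by
    rwa [ne_eq, Complex.normSq_eq_zero]
  rw [moebius, Matrix.det_fin_two, Complex.div_im]
  simp only [Complex.normSq_apply, Complex.add_re, Complex.add_im, Complex.mul_re,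
    Complex.mul_im, Complex.ofReal_re, Complex.ofReal_im] at *
  field_simp
  ring

lemma key (N : ℕ) (hN : 0 < N) (hsf : Squarefree N) (z : ℂ) (hz : 0 < z.im)
    (hmax : ∀ σ ∈ AtkinLehner N, (moebius σ z).im ≤ z.im)
    (c d : ℤ) (hcd : IsCoprime c d) :
    Complex.normSq ((c : ℂ) * z + (d : ℂ)) ≥ (Int.gcd c N : ℝ) / N := by
  set g : ℕ := Int.gcd c N with hg
  have hgnat : g = Nat.gcd c.natAbs N := by simp [hg, Int.gcd]
  have hgN : g ∣ N := by rw [hgnat]; exact Nat.gcd_dvd_right _ _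
  have hg0 : 0 < g := by
    rw [hgnat]; exact Nat.gcd_pos_of_pos_right _ hN
  set Q : ℕ := N / g with hQ
  have hQ0 : 0 < Q := Nat.div_pos (Nat.le_of_dvd hN hgN) hg0
  have hQg : Q * g = N := Nat.div_mul_cancel hgN
  have hgc : (g : ℤ) ∣ c := Int.gcd_dvd_left _ _
  obtain ⟨c₁, hc₁⟩ := hgc
  -- coprimality of Q and c
  have hQc : IsCoprime (Q : ℤ) c := by
    rw [Int.isCoprime_iff_gcd_eq_one]
    set t := Int.gcd (Q : ℤ) c with ht
    have htQ : t ∣ Q := by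
      have := Int.gcd_dvd_left (a := (Q:ℤ)) (b := c)
      exact_mod_cast Int.ofNat_dvd.mp (by exact_mod_cast this)
    have htc : t ∣ c.natAbs := by
      exact Int.ofNat_dvd.mp (Int.dvd_natAbs.mpr (Int.gcd_dvd_right _ _))
    have htg : t ∣ g := by
      rw [hgnat]
      exact Nat.dvd_gcd htc (htQ.trans (Nat.div_dvd_of_dvd hgN))
    have : t * t ∣ N := hQg ▸ mul_dvd_mul htQ htg
    exact Nat.isUnit_iff.mp (hsf t this)
  have hQdc : IsCoprime ((Q : ℤ) * d) c := (hQc.mul_left hcd.symm)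
  obtain ⟨u, v, huv⟩ := hQdc
  -- huv : u * (Q*d) + v * c = 1
  set σ : M2 := (Real.sqrt Q)⁻¹ • !![(Q : ℝ) * u, ((-v : ℤ) : ℝ); (N : ℝ) * c₁, (Q : ℝ) * d] with hσ
  have hQR : (0:ℝ) < Q := by exact_mod_cast hQ0
  have hsq : Real.sqrt Q ≠ 0 := by positivity
  have hNR : (N : ℝ) = Q * g := by exact_mod_cast hQg.symm
  have hcR : (c : ℝ) = g * c₁ := by exact_mod_cast hc₁
  have hdetM : (((Q : ℝ) * u) * ((Q : ℝ) * d) - ((-v : ℤ) : ℝ) * ((N : ℝ) * c₁)) = Q := by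
    have hNZ : (N : ℤ) = Q * g := by exact_mod_cast hQg.symm
    have h2 : ((Q:ℤ) * u) * ((Q:ℤ) * d) - (-v) * ((N:ℤ) * c₁) = Q := by
      linear_combination (Q:ℤ) * huv + v * c₁ * hNZ - (Q:ℤ) * v * hc₁
    exact_mod_cast h2
  have hdet : σ.det = 1 := by
    rw [hσ, Matrix.det_smul, Matrix.det_fin_two_of]
    simp only [Fintype.card_fin]
    rw [hdetM]
    rw [inv_pow, Real.sq_sqrt hQR.le]
    field_simp
  have hmem : σ ∈ AtkinLehner N :=
    ⟨hdet, Q, u, -v, c₁, d, hQ0, Nat.div_dvd_of_dvd hgN, rfl⟩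
  have hne : (c : ℂ) * z + (d : ℂ) ≠ 0 := by
    intro h
    have him : ((c : ℂ) * z + (d : ℂ)).im = 0 := by rw [h]; simp
    simp only [Complex.add_im, Complex.mul_im, Complex.intCast_im, Complex.intCast_re,
      zero_mul, mul_zero, add_zero, zero_add] at him
    rcases mul_eq_zero.mp him with h1 | h2
    · have hc0 : c = 0 := by exact_mod_cast h1
      subst hc0
      simp only [Int.cast_zero, zero_mul, zero_add] at h
      have hd0 : d = 0 := by exact_mod_cast h
      subst hd0
      exact not_isCoprime_zero_zero hcd
    · exact hz.ne' h2
  have hns : 0 < Complex.normSq ((c : ℂ) * z + (d : ℂ)) := by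
    rwa [Complex.normSq_pos]
  -- denominator of σ
  have hden : ((σ 1 0 : ℝ) : ℂ) * z + ((σ 1 1 : ℝ) : ℂ)
      = (((Real.sqrt Q)⁻¹ * Q : ℝ) : ℂ) * ((c : ℂ) * z + (d : ℂ)) := by
    have e10 : σ 1 0 = (Real.sqrt Q)⁻¹ * ((N : ℝ) * c₁) := by
      simp [hσ]
    have e11 : σ 1 1 = (Real.sqrt Q)⁻¹ * ((Q : ℝ) * d) := by
      simp [hσ]
    rw [e10, e11]
    have : (N : ℝ) * c₁ = (Q : ℝ) * c := by rw [hNR, hcR]; ring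
    rw [this]
    push_cast
    ring
  have hdnz : ((σ 1 0 : ℝ) : ℂ) * z + ((σ 1 1 : ℝ) : ℂ) ≠ 0 := by
    rw [hden]
    apply mul_ne_zero _ hne
    simp only [ne_eq, Complex.ofReal_eq_zero]
    positivity
  have him := moebius_im_eq σ z hdnz
  rw [hdet, hden] at him
  rw [Complex.normSq_mul, Complex.normSq_ofReal] at him
  have hs2 : Real.sqrt Q * Real.sqrt Q = Q := Real.mul_self_sqrt hQR.le
  have hrr : (Real.sqrt Q)⁻¹ * (Q:ℝ) * ((Real.sqrt Q)⁻¹ * (Q:ℝ)) = Q := by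
    field_simp
    rw [Real.sq_sqrt hQR.le]
  rw [hrr, one_mul] at him
  have hle := hmax σ hmem
  rw [him] at hle
  set n := Complex.normSq ((c : ℂ) * z + (d : ℂ)) with hn
  have hQn : 0 < (Q:ℝ) * n := by positivity
  have h1 : 1 ≤ (Q:ℝ) * n := by
    rw [div_le_iff₀ hQn] at hle
    nlinarith [hz]
  have hgNn : (g : ℝ) / N = 1 / Q := by
    rw [hNR]; field_simp
  show ((g:ℕ) : ℝ) / N ≤ n
  rw [hgNn, div_le_iff₀ hQR]
  linarith


/-- Spacing lemma: if z ∈ ℍ has maximal imaginary part under the orbit of A₀(N),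
    then Im(z) ≥ √3/(2N) and |cz+d|² ≥ gcd(c,N)/N for all (c,d) ≠ (0,0). -/
theorem stmt8 (N : ℕ) (hN : 0 < N) (hsf : Squarefree N) (z : ℂ) (hz : 0 < z.im)
    (hmax : ∀ σ ∈ AtkinLehner N, (moebius σ z).im ≤ z.im) :
    z.im ≥ Real.sqrt 3 / (2 * N) ∧
    ∀ c d : ℤ, ¬(c = 0 ∧ d = 0) →
      ‖(c : ℂ) * z + (d : ℂ)‖ ^ 2 ≥ (Int.gcd c N : ℝ) / N := by
  have hNR : (0:ℝ) < N := by exact_mod_cast hN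
  have part2 : ∀ c d : ℤ, ¬(c = 0 ∧ d = 0) →
      ‖(c : ℂ) * z + (d : ℂ)‖ ^ 2 ≥ (Int.gcd c N : ℝ) / N := by
    intro c d hcd0
    set e : ℕ := Int.gcd c d with he
    have he0 : 0 < e := by
      rw [he, Int.gcd_pos_iff]
      rcases not_and_or.mp hcd0 with h | h
      · exact Or.inl h
      · exact Or.inr h
    have hec : (e : ℤ) ∣ c := Int.gcd_dvd_left _ _
    have hed : (e : ℤ) ∣ d := Int.gcd_dvd_right _ _
    obtain ⟨c', hc'⟩ := hec
    obtain ⟨d', hd'⟩ := hed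
    have hcop : IsCoprime c' d' := by
      rw [Int.isCoprime_iff_gcd_eq_one]
      have : c' = c / e := by rw [hc']; rw [Int.mul_ediv_cancel_left]; exact_mod_cast he0.ne'
      have hd'' : d' = d / e := by rw [hd']; rw [Int.mul_ediv_cancel_left]; exact_mod_cast he0.ne'
      rw [this, hd'', he]
      exact Int.gcd_div_gcd_div_gcd (by exact_mod_cast he0)
    have hkey := key N hN hsf z hz hmax c' d' hcop
    -- Complex.abs ^ 2 = normSq
    rw [ge_iff_le, ← Complex.sq_norm] at hkey
    rw [ge_iff_le]
    have hsplit : ‖(c : ℂ) * z + (d : ℂ)‖ ^ 2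
        = (e:ℝ)^2 * ‖(c' : ℂ) * z + (d' : ℂ)‖ ^ 2 := by
      have : (c : ℂ) * z + (d : ℂ) = (e : ℂ) * ((c' : ℂ) * z + (d' : ℂ)) := by
        rw [hc', hd']; push_cast; ring
      rw [this, norm_mul, mul_pow]
      norm_num [Complex.norm_natCast]
    rw [hsplit]
    -- gcd inequality
    have hgcd : (Int.gcd c N : ℝ) ≤ (e:ℝ)^2 * (Int.gcd c' N : ℝ) := by
      have h1 : Int.gcd c N ≤ e^2 * Int.gcd c' N := by
        have hnat : Int.gcd c N = Nat.gcd (e * c'.natAbs) N := by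
          rw [Int.gcd]
          congr 1
          rw [hc', Int.natAbs_mul]
          simp
        have hdvd : Nat.gcd (e * c'.natAbs) N ∣ Nat.gcd e N * Nat.gcd c'.natAbs N := by
          have := Nat.gcd_mul_right_dvd_mul_gcd N e c'.natAbs
          rwa [Nat.gcd_comm N (e * c'.natAbs), Nat.gcd_comm N e, Nat.gcd_comm N c'.natAbs] at this
        have h2 : Nat.gcd (e * c'.natAbs) N ≤ Nat.gcd e N * Nat.gcd c'.natAbs N :=
          Nat.le_of_dvd (Nat.mul_pos (Nat.gcd_pos_of_pos_right _ hN) (Nat.gcd_pos_of_pos_right _ hN)) hdvd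
        have h3 : Nat.gcd e N ≤ e := Nat.le_of_dvd he0 (Nat.gcd_dvd_left _ _)
        calc Int.gcd c N = Nat.gcd (e * c'.natAbs) N := hnat
          _ ≤ Nat.gcd e N * Nat.gcd c'.natAbs N := h2
          _ ≤ e * Int.gcd c' N := by
              apply Nat.mul_le_mul_right
              exact h3
          _ ≤ e^2 * Int.gcd c' N := by
              apply Nat.mul_le_mul_right
              nlinarith [he0]
      exact_mod_cast h1
    calc (Int.gcd c N : ℝ) / N ≤ (e:ℝ)^2 * (Int.gcd c' N : ℝ) / N := by
          gcongr
      _ ≤ (e:ℝ)^2 * ‖(c' : ℂ) * z + (d' : ℂ)‖ ^ 2 := by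
          rw [mul_div_assoc]
          apply mul_le_mul_of_nonneg_left hkey (by positivity)
  refine ⟨?_, part2⟩
  -- part 1
  set dd : ℤ := -round ((N:ℝ) * z.re) with hdd
  have := part2 N dd (by simp [hN.ne'])
  have hgNN : Int.gcd (N:ℤ) (N:ℤ) = N := by simp [Int.gcd]
  rw [hgNN] at this
  rw [div_self hNR.ne', Complex.sq_norm, Complex.normSq_apply] at this
  push_cast at this
  have hre : ((N:ℂ) * z + (dd:ℂ)).re = (N:ℝ) * z.re + dd := by simp
  have him : ((N:ℂ) * z + (dd:ℂ)).im = (N:ℝ) * z.im := by simp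
  rw [hre, him] at this
  have hround : |(N:ℝ) * z.re + dd| ≤ 1/2 := by
    rw [hdd]
    push_cast
    have := abs_sub_round ((N:ℝ) * z.re)
    simpa [sub_eq_add_neg] using this
  have hsq : ((N:ℝ) * z.re + dd)^2 ≤ 1/4 := by
    nlinarith [hround, abs_nonneg ((N:ℝ) * z.re + dd), sq_abs ((N:ℝ) * z.re + dd)]
  have h34 : 3/4 ≤ ((N:ℝ) * z.im)^2 := by nlinarith [this, hsq]
  have h3 : Real.sqrt 3 ≤ 2 * N * z.im := by
    have h2 : (3:ℝ) ≤ (2 * N * z.im)^2 := by nlinarith [h34]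
    calc Real.sqrt 3 ≤ Real.sqrt ((2 * N * z.im)^2) := Real.sqrt_le_sqrt h2
      _ = 2 * N * z.im := Real.sqrt_sq (by positivity)
  rw [ge_iff_le, div_le_iff₀ (by positivity)]
  linarith
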